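/- For ρ > 0 and t < 0, the function u(t,s) = −√ρ·sinh(2√ρ·t) / (2(cosh(2√ρ·t) + cosh(√ρ·s))) is positive for all s ∈ ℝ and satisfies the logarithmic diffusion equation ∂u/∂t = ∂²(log u)/∂s². -/

import Mathlib

theorem stmt_13 (ρ : ℝ) (hρ : 0 < ρ) (u : ℝ → ℝ → ℝ)
    (hudef : ∀ t s, u t s =
      -Real.sqrt ρ * Real.sinh (2 * Real.sqrt ρ * t) /
        (2 * (Real.cosh (2 * Real.sqrt ρ * t) + Real.cosh (Real.sqrt ρ * s)))) :
    ∀ t : ℝ, t < 0 → ∀ s : ℝ,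
      0 < u t s ∧
      deriv (fun t' => u t' s) t =
        deriv (fun s' => deriv (fun s'' => Real.log (u t s'')) s') s := by
  intro t ht s
  set a := Real.sqrt ρ with ha_def
  have ha : 0 < a := Real.sqrt_pos.mpr hρ
  have hsinh : Real.sinh (2 * a * t) < 0 := by
    rw [Real.sinh_neg_iff]; nlinarith
  have hN : 0 < -a * Real.sinh (2 * a * t) := by nlinarith
  have hD : ∀ x : ℝ, 0 < Real.cosh (2 * a * t) + Real.cosh (a * x) := by
    intro x
    have h1 := Real.one_le_cosh (2 * a * t)
    have h2 := Real.one_le_cosh (a * x)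
    linarith
  have h2D : ∀ x : ℝ, (2 : ℝ) * (Real.cosh (2 * a * t) + Real.cosh (a * x)) ≠ 0 := by
    intro x; positivity
  -- positivity of u
  have hpos : 0 < u t s := by
    rw [hudef]
    exact div_pos hN (by positivity)
  refine ⟨hpos, ?_⟩
  -- time derivative
  have hft : (fun t' => u t' s) = fun t' =>
      -a * Real.sinh (2 * a * t') / (2 * (Real.cosh (2 * a * t') + Real.cosh (a * s))) :=
    funext fun t' => hudef t' s
  have hlin : HasDerivAt (fun t' : ℝ => 2 * a * t') (2 * a) t := by
    simpa using (hasDerivAt_id t).const_mul (2 * a)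
  have hnum : HasDerivAt (fun t' => -a * Real.sinh (2 * a * t'))
      (-a * (Real.cosh (2 * a * t) * (2 * a))) t := (hlin.sinh).const_mul (-a)
  have hden : HasDerivAt (fun t' => 2 * (Real.cosh (2 * a * t') + Real.cosh (a * s)))
      (2 * (Real.sinh (2 * a * t) * (2 * a))) t := by
    simpa using ((hlin.cosh).add_const (Real.cosh (a * s))).const_mul 2
  have hdt : deriv (fun t' => u t' s) t =
      (-a * (Real.cosh (2 * a * t) * (2 * a)) *
          (2 * (Real.cosh (2 * a * t) + Real.cosh (a * s))) -
        -a * Real.sinh (2 * a * t) * (2 * (Real.sinh (2 * a * t) * (2 * a)))) /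
        (2 * (Real.cosh (2 * a * t) + Real.cosh (a * s))) ^ 2 := by
    rw [hft]
    exact (hnum.div hden (h2D s)).deriv
  -- inner s derivative of log u
  have hinner : ∀ x : ℝ, deriv (fun s'' => Real.log (u t s'')) x =
      2 * (Real.sinh (a * x) * a) / (2 * (Real.cosh (2 * a * t) + Real.cosh (a * x))) * (-1) := by
    intro x
    have hfun : (fun s'' => Real.log (u t s'')) = fun s'' =>
        Real.log (-a * Real.sinh (2 * a * t)) -
          Real.log (2 * (Real.cosh (2 * a * t) + Real.cosh (a * s''))) := by
      funext s''
      rw [hudef, Real.log_div (ne_of_gt hN) (h2D s'')]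
    rw [hfun]
    have hlin2 : HasDerivAt (fun s'' : ℝ => a * s'') a x := by
      simpa using (hasDerivAt_id x).const_mul a
    have hd : HasDerivAt (fun s'' => 2 * (Real.cosh (2 * a * t) + Real.cosh (a * s'')))
        (2 * (Real.sinh (a * x) * a)) x := by
      simpa using ((hlin2.cosh).const_add (Real.cosh (2 * a * t))).const_mul 2
    have hlog : HasDerivAt (fun s'' =>
        Real.log (-a * Real.sinh (2 * a * t)) -
          Real.log (2 * (Real.cosh (2 * a * t) + Real.cosh (a * s''))))
        (0 - 2 * (Real.sinh (a * x) * a) / (2 * (Real.cosh (2 * a * t) + Real.cosh (a * x)))) x :=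
      (hasDerivAt_const x _).sub (hd.log (h2D x))
    rw [hlog.deriv]; ring
  -- outer s derivative
  have houter : (fun s' => deriv (fun s'' => Real.log (u t s'')) s') = fun s' =>
      2 * (Real.sinh (a * s') * a) / (2 * (Real.cosh (2 * a * t) + Real.cosh (a * s'))) * (-1) :=
    funext hinner
  have hlin2 : HasDerivAt (fun s' : ℝ => a * s') a s := by
    simpa using (hasDerivAt_id s).const_mul a
  have hnum2 : HasDerivAt (fun s' => 2 * (Real.sinh (a * s') * a))
      (2 * (Real.cosh (a * s) * a * a)) s := by
    simpa [mul_comm, mul_assoc, mul_left_comm] using ((hlin2.sinh).mul_const a).const_mul 2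
  have hden2 : HasDerivAt (fun s' => 2 * (Real.cosh (2 * a * t) + Real.cosh (a * s')))
      (2 * (Real.sinh (a * s) * a)) s := by
    simpa using ((hlin2.cosh).const_add (Real.cosh (2 * a * t))).const_mul 2
  have hds : deriv (fun s' =>
      2 * (Real.sinh (a * s') * a) / (2 * (Real.cosh (2 * a * t) + Real.cosh (a * s'))) * (-1)) s =
      (2 * (Real.cosh (a * s) * a * a) * (2 * (Real.cosh (2 * a * t) + Real.cosh (a * s))) -
        2 * (Real.sinh (a * s) * a) * (2 * (Real.sinh (a * s) * a))) /
        (2 * (Real.cosh (2 * a * t) + Real.cosh (a * s))) ^ 2 * (-1) :=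
    (((hnum2.div hden2 (h2D s)).mul_const (-1))).deriv
  rw [hdt, houter, hds]
  have hid1 := Real.cosh_sq_sub_sinh_sq (2 * a * t)
  have hid2 := Real.cosh_sq_sub_sinh_sq (a * s)
  have hDs := hD s
  field_simp
  linear_combination (-1) * Real.cosh_sq_sub_sinh_sq (a * 2 * t) + hid2
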